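/- Let C(r,s,t,a,b) := ((r·a − (1−r)·b)² + 4r(1−r)·a·b·(st + √((1−s²)(1−t²)))²)^{1/2} for r ∈ (0,1), a,b > 0, s,t ∈ [0,1]. Then C(r,s,t,a,b) ≤ r·a + (1−r)·b, with equality if and only if s = t. -/
import Mathlib


open Matrix Kronecker
open scoped ComplexOrder

theorem stmt16 (r a b s t : ℝ) (hr : r ∈ Set.Ioo (0 : ℝ) 1) (ha : 0 < a) (hb : 0 < b)
    (hs : s ∈ Set.Icc (0 : ℝ) 1) (ht : t ∈ Set.Icc (0 : ℝ) 1) :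
    Real.sqrt ((r * a - (1 - r) * b) ^ 2
        + 4 * r * (1 - r) * a * b * (s * t + Real.sqrt ((1 - s ^ 2) * (1 - t ^ 2))) ^ 2)
      ≤ r * a + (1 - r) * b
    ∧ (Real.sqrt ((r * a - (1 - r) * b) ^ 2
        + 4 * r * (1 - r) * a * b * (s * t + Real.sqrt ((1 - s ^ 2) * (1 - t ^ 2))) ^ 2)
        = r * a + (1 - r) * b ↔ s = t) := by
  obtain ⟨hr0, hr1⟩ := hr
  obtain ⟨hs0, hs1⟩ := hs
  obtain ⟨ht0, ht1⟩ := ht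
  have hs2 : 0 ≤ 1 - s ^ 2 := by nlinarith
  have ht2 : 0 ≤ 1 - t ^ 2 := by nlinarith
  set u := Real.sqrt ((1 - s ^ 2) * (1 - t ^ 2)) with hu
  have hu0 : 0 ≤ u := Real.sqrt_nonneg _
  have husq : u ^ 2 = (1 - s ^ 2) * (1 - t ^ 2) := by
    rw [hu, Real.sq_sqrt (mul_nonneg hs2 ht2)]
  clear_value u
  clear hu
  have hst : 0 ≤ 1 - s * t := by nlinarith
  have hule : u ≤ 1 - s * t := by
    nlinarith [sq_nonneg (s - t), sq_nonneg (u - (1 - s * t)), sq_nonneg (u + (1 - s * t))]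
  have hK0 : 0 ≤ s * t + u := by nlinarith
  have hK1 : s * t + u ≤ 1 := by linarith
  have hK2 : (s * t + u) ^ 2 ≤ 1 := by nlinarith
  have hM0 : 0 ≤ r * a + (1 - r) * b := by nlinarith
  have h4 : 0 < 4 * r * (1 - r) * a * b := by
    have : 0 < 1 - r := by linarith
    positivity
  have key : 0 ≤ 4 * r * (1 - r) * a * b * (1 - (s * t + u) ^ 2) :=
    mul_nonneg h4.le (by linarith)
  have hXle : (r * a - (1 - r) * b) ^ 2 + 4 * r * (1 - r) * a * b * (s * t + u) ^ 2
      ≤ (r * a + (1 - r) * b) ^ 2 := by nlinarith [key]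
  have hX0 : 0 ≤ (r * a - (1 - r) * b) ^ 2 + 4 * r * (1 - r) * a * b * (s * t + u) ^ 2 :=
    add_nonneg (sq_nonneg _) (mul_nonneg h4.le (sq_nonneg _))
  have hle : Real.sqrt ((r * a - (1 - r) * b) ^ 2
      + 4 * r * (1 - r) * a * b * (s * t + u) ^ 2) ≤ r * a + (1 - r) * b := by
    calc Real.sqrt ((r * a - (1 - r) * b) ^ 2 + 4 * r * (1 - r) * a * b * (s * t + u) ^ 2)
        ≤ Real.sqrt ((r * a + (1 - r) * b) ^ 2) := Real.sqrt_le_sqrt hXle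
      _ = r * a + (1 - r) * b := Real.sqrt_sq hM0
  refine ⟨hle, ?_, ?_⟩
  · intro h
    have hXeq : (r * a - (1 - r) * b) ^ 2 + 4 * r * (1 - r) * a * b * (s * t + u) ^ 2
        = (r * a + (1 - r) * b) ^ 2 := by
      have := congrArg (fun x => x ^ 2) h
      simpa [Real.sq_sqrt hX0] using this
    have hcan : 4 * r * (1 - r) * a * b * (s * t + u) ^ 2
        = 4 * r * (1 - r) * a * b * 1 := by linear_combination hXeq
    have hKeq : (s * t + u) ^ 2 = 1 := mul_left_cancel₀ h4.ne' hcan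
    have hfac : (s * t + u - 1) * (s * t + u + 1) = 0 := by linear_combination hKeq
    rcases mul_eq_zero.mp hfac with h1 | h1
    · have hueq : u = 1 - s * t := by linarith
      have hsq : (s - t) ^ 2 = 0 := by
        linear_combination (-(u + 1 - s * t)) * hueq + husq
      have := sq_eq_zero_iff.mp hsq
      linarith
    · linarith
  · intro h
    subst h
    have hfac : (u - (1 - s ^ 2)) * (u + (1 - s ^ 2)) = 0 := by linear_combination husq
    have hue : u = 1 - s ^ 2 := by
      rcases mul_eq_zero.mp hfac with h1 | h1
      · linarith
      · nlinarith
    have hKe : s * s + u = 1 := by rw [hue]; ring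
    rw [hKe]
    have hrw : (r * a - (1 - r) * b) ^ 2 + 4 * r * (1 - r) * a * b * (1 : ℝ) ^ 2
        = (r * a + (1 - r) * b) ^ 2 := by ring
    rw [hrw, Real.sqrt_sq hM0]
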